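/- Let G = (V, E, w) be a connected weighted graph with positive edge weights, let T = (V, F, w) be a spanning tree of G, with Laplacians L_G and L_T, and let M be the Moore–Penrose pseudoinverse of L_T. Then for every real t > 0, the number of eigenvalues of L_G · M (roots of its characteristic polynomial over ℂ, counted with multiplicity) whose real part is greater than t is at most st_T(G)/t, where st_T(G) is the stretch of G with respect to T. -/

import Mathlib

open Matrix

/-- The rank-one Laplacian contribution `(ψ_u - ψ_v)(ψ_u - ψ_v)ᵀ` of an edge,
as a function on unordered pairs. -/
noncomputable def edgeLap {V : Type*} [DecidableEq V] : Sym2 V → Matrix V V ℝ :=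
  Sym2.lift ⟨fun u v =>
      Matrix.vecMulVec (Pi.single u 1 - Pi.single v 1) (Pi.single u 1 - Pi.single v 1),
    by
      intro u v
      ext i j
      simp [Matrix.vecMulVec]
      ring⟩

/-- The Laplacian of a weighted graph: `L_G = Σ_{e∈E} w(e) (ψ_u - ψ_v)(ψ_u - ψ_v)ᵀ`. -/
noncomputable def lapW {V : Type*} [Fintype V] [DecidableEq V]
    (G : SimpleGraph V) [DecidableRel G.Adj] (w : Sym2 V → ℝ) : Matrix V V ℝ :=
  ∑ e ∈ G.edgeFinset, w e • edgeLap e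

/-- The sum `Σ_i 1 / w(e_i)` over the edges `e_1, …, e_k` of the unique simple path in the
tree `T` from `u` to `v`. -/
noncomputable def treePathWeight {V : Type*} (T : SimpleGraph V) (hT : T.IsTree)
    (w : Sym2 V → ℝ) (u v : V) : ℝ :=
  (((hT.existsUnique_path u v).choose.edges).map fun e => 1 / w e).sum

lemma treePathWeight_symm {V : Type*} (T : SimpleGraph V) (hT : T.IsTree)
    (w : Sym2 V → ℝ) (u v : V) :
    treePathWeight T hT w u v = treePathWeight T hT w v u := by
  have h1 := (hT.existsUnique_path u v).choose_spec
  have h2 := (hT.existsUnique_path v u).choose_spec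
  have hrev : (hT.existsUnique_path u v).choose.reverse = (hT.existsUnique_path v u).choose :=
    h2.2 _ h1.1.reverse
  unfold treePathWeight
  rw [← hrev, SimpleGraph.Walk.edges_reverse, List.map_reverse, List.sum_reverse]

/-- The stretch `st_T(e) = w(e) · Σ_i 1 / w(e_i)` of an unordered pair `e`, where
`e_1, …, e_k` are the edges of the unique simple path in `T` joining the endpoints of `e`. -/
noncomputable def stretchEdge {V : Type*} (T : SimpleGraph V) (hT : T.IsTree)
    (w : Sym2 V → ℝ) : Sym2 V → ℝ :=
  Sym2.lift ⟨fun u v => w s(u, v) * treePathWeight T hT w u v,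
    by
      intro u v
      simp only []
      rw [Sym2.eq_swap, treePathWeight_symm]⟩

/-- The stretch of `G` with respect to the spanning tree `T`:
`st_T(G) = Σ_{e∈E} st_T(e)`. -/
noncomputable def stretch {V : Type*} [Fintype V] [DecidableEq V]
    (G : SimpleGraph V) [DecidableRel G.Adj] (T : SimpleGraph V) (hT : T.IsTree)
    (w : Sym2 V → ℝ) : ℝ :=
  ∑ e ∈ G.edgeFinset, stretchEdge T hT w e

/-! ### Auxiliary lemmas -/

section Aux

open scoped ComplexOrder

variable {V : Type*} [Fintype V] [DecidableEq V]

lemma edgeLap_mk (u v : V) :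
    edgeLap s(u, v) =
      Matrix.vecMulVec (Pi.single u 1 - Pi.single v 1) (Pi.single u 1 - Pi.single v 1) := rfl

lemma edgeLap_transpose (e : Sym2 V) : (edgeLap e)ᵀ = edgeLap e := by
  induction e using Sym2.ind with
  | _ u v =>
    rw [edgeLap_mk]
    ext i j
    simp [Matrix.vecMulVec_apply, Matrix.transpose_apply, mul_comm]

lemma lapW_transpose (G : SimpleGraph V) [DecidableRel G.Adj] (w : Sym2 V → ℝ) :
    (lapW G w)ᵀ = lapW G w := by
  unfold lapW
  rw [Matrix.transpose_sum]
  refine Finset.sum_congr rfl fun e _ => ?_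
  rw [Matrix.transpose_smul, edgeLap_transpose]

lemma conjTranspose_real (A : Matrix V V ℝ) : Aᴴ = Aᵀ := by
  ext i j
  simp [Matrix.conjTranspose_apply]

lemma sum_mulVec {ι : Type*} (s : Finset ι) (A : ι → Matrix V V ℝ) (x : V → ℝ) :
    (∑ i ∈ s, A i) *ᵥ x = ∑ i ∈ s, A i *ᵥ x := by
  classical
  induction s using Finset.induction with
  | empty => ext j; simp [Matrix.mulVec, dotProduct]
  | insert _ _ hn ih =>
    rw [Finset.sum_insert hn, Finset.sum_insert hn, Matrix.add_mulVec, ih]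

lemma edgeLap_mulVec (u v : V) (x : V → ℝ) :
    edgeLap s(u, v) *ᵥ x = (x u - x v) • (Pi.single u 1 - Pi.single v 1) := by
  rw [edgeLap_mk]
  funext i
  simp only [Matrix.mulVec, Matrix.vecMulVec_apply, dotProduct, Pi.smul_apply,
    smul_eq_mul]
  have hfac : (∑ j, (Pi.single u 1 - Pi.single v 1 : V → ℝ) i * (Pi.single u 1 - Pi.single v 1 : V → ℝ) j * x j)
      = (Pi.single u 1 - Pi.single v 1 : V → ℝ) i * ∑ j, (Pi.single u 1 - Pi.single v 1 : V → ℝ) j * x j := by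
    rw [Finset.mul_sum]
    exact Finset.sum_congr rfl fun j _ => by ring
  rw [hfac]
  have hsum : (∑ j, (Pi.single u 1 - Pi.single v 1 : V → ℝ) j * x j) = x u - x v := by
    simp [Pi.sub_apply, sub_mul, Finset.sum_sub_distrib, Pi.single_apply, ite_mul]
  rw [hsum]
  ring

lemma dotProduct_edge (x : V → ℝ) (u v : V) :
    x ⬝ᵥ (Pi.single u 1 - Pi.single v 1) = x u - x v := by
  rw [dotProduct_sub, dotProduct_single, dotProduct_single]
  ring

lemma dotProduct_finset_sum {ι : Type*} (s : Finset ι) (x : V → ℝ) (f : ι → V → ℝ) :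
    x ⬝ᵥ (∑ i ∈ s, f i) = ∑ i ∈ s, x ⬝ᵥ f i := by
  classical
  induction s using Finset.induction with
  | empty => simp
  | insert _ _ hn ih => rw [Finset.sum_insert hn, Finset.sum_insert hn, dotProduct_add, ih]

lemma lapW_posSemidef (G : SimpleGraph V) [DecidableRel G.Adj] (w : Sym2 V → ℝ)
    (hw : ∀ e ∈ G.edgeSet, 0 ≤ w e) : (lapW G w).PosSemidef := by
  rw [Matrix.posSemidef_iff_dotProduct_mulVec]
  constructor
  · rw [Matrix.IsHermitian, conjTranspose_real, lapW_transpose]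
  · intro x
    have hsx : star x = x := by funext i; simp
    rw [hsx]
    unfold lapW
    rw [_root_.sum_mulVec]
    rw [dotProduct_finset_sum]
    refine Finset.sum_nonneg fun e he => ?_
    induction e using Sym2.ind with
    | _ u v =>
      rw [Matrix.smul_mulVec, edgeLap_mulVec, dotProduct_smul,
        dotProduct_smul, dotProduct_edge, smul_eq_mul, smul_eq_mul]
      have := hw _ ((SimpleGraph.mem_edgeFinset).mp he)
      nlinarith [this, sq_nonneg (x u - x v)]

/-- Uniqueness-style argument: the Moore–Penrose pseudoinverse of a symmetric matrix is
symmetric. -/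
lemma pinv_symm {A X : Matrix V V ℝ} (hA : Aᵀ = A)
    (h1 : A * X * A = A) (h2 : X * A * X = X)
    (h3 : (A * X)ᵀ = A * X) (h4 : (X * A)ᵀ = X * A) : Xᵀ = X := by
  have ha : Xᵀ * A = A * X := by
    calc Xᵀ * A = Xᵀ * Aᵀ := by rw [hA]
    _ = (A * X)ᵀ := by rw [Matrix.transpose_mul]
    _ = A * X := h3
  have hb : A * Xᵀ = X * A := by
    calc A * Xᵀ = Aᵀ * Xᵀ := by rw [hA]
    _ = (X * A)ᵀ := by rw [Matrix.transpose_mul]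
    _ = X * A := h4
  have h2t : Xᵀ * A * Xᵀ = Xᵀ := by
    calc Xᵀ * A * Xᵀ = Xᵀ * Aᵀ * Xᵀ := by rw [hA]
    _ = (X * A * X)ᵀ := by rw [Matrix.transpose_mul, Matrix.transpose_mul, Matrix.mul_assoc]
    _ = Xᵀ := by rw [h2]
  have hc : A * X = A * Xᵀ := by
    calc A * X = Xᵀ * A := ha.symm
    _ = Xᵀ * (A * X * A) := by rw [h1]
    _ = (Xᵀ * A) * (X * A) := by simp only [Matrix.mul_assoc]
    _ = (A * X) * (X * A) := by rw [ha]
    _ = (A * X) * (A * Xᵀ) := by rw [hb]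
    _ = (A * X * A) * Xᵀ := by simp only [Matrix.mul_assoc]
    _ = A * Xᵀ := by rw [h1]
  have hd : X * A = Xᵀ * A := by
    calc X * A = A * Xᵀ := hb.symm
    _ = A * X := hc.symm
    _ = Xᵀ * A := ha.symm
  calc Xᵀ = Xᵀ * A * Xᵀ := h2t.symm
  _ = X * A * Xᵀ := by rw [← hd]
  _ = X * (A * Xᵀ) := by rw [Matrix.mul_assoc]
  _ = X * (A * X) := by rw [hc]
  _ = X * A * X := by rw [Matrix.mul_assoc]
  _ = X := h2

lemma map_conjTranspose_real (B : Matrix V V ℝ) :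
    (Bᵀ).map (algebraMap ℝ ℂ) = ((B.map (algebraMap ℝ ℂ)))ᴴ := by
  ext i j
  simp [Matrix.conjTranspose_apply, Matrix.map_apply, Complex.conj_ofReal]

lemma posSemidef_map {A : Matrix V V ℝ} (hA : A.PosSemidef) :
    (A.map (algebraMap ℝ ℂ)).PosSemidef := by
  obtain ⟨m, v, hv⟩ := Matrix.posSemidef_iff_eq_sum_vecMulVec.mp hA
  set B : Matrix (Fin m) V ℝ := Matrix.of fun i j => v i j
  have : A.map (algebraMap ℝ ℂ)
      = (B.map (algebraMap ℝ ℂ))ᴴ * (B.map (algebraMap ℝ ℂ)) := by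
    rw [hv]
    ext i j
    simp [B, Matrix.mul_apply, Matrix.vecMulVec_apply, Matrix.sum_apply,
      Matrix.conjTranspose_apply]
  rw [this]
  exact Matrix.posSemidef_conjTranspose_mul_self _

lemma charpoly_eval (A : Matrix V V ℂ) (μ : ℂ) :
    A.charpoly.eval μ = (μ • (1 : Matrix V V ℂ) - A).det := by
  rw [Matrix.charpoly, ← Polynomial.coe_evalRingHom, RingHom.map_det]
  congr 1
  ext i j
  by_cases h : i = j
  · subst h
    simp [Matrix.charmatrix_apply_eq, Matrix.one_apply, Matrix.smul_apply]
  · simp [Matrix.charmatrix_apply_ne _ _ _ h, Matrix.one_apply_ne h, Matrix.smul_apply]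

lemma root_re_nonneg {A B : Matrix V V ℂ} (hA : A.PosSemidef) (hB : B.PosSemidef) {μ : ℂ}
    (h : (A * B).charpoly.IsRoot μ) : 0 ≤ μ.re := by
  rw [Polynomial.IsRoot, charpoly_eval] at h
  obtain ⟨x, hx0, hx⟩ := Matrix.exists_mulVec_eq_zero_iff.mpr h
  rw [Matrix.sub_mulVec, Matrix.smul_mulVec, Matrix.one_mulVec, sub_eq_zero] at hx
  have hABx : A *ᵥ (B *ᵥ x) = μ • x := by rw [Matrix.mulVec_mulVec, ← hx]
  have hc : 0 ≤ star (B *ᵥ x) ⬝ᵥ (A *ᵥ (B *ᵥ x)) := hA.dotProduct_mulVec_nonneg _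
  have hr : 0 ≤ star x ⬝ᵥ (B *ᵥ x) := hB.dotProduct_mulVec_nonneg x
  have hsy : star (B *ᵥ x) ⬝ᵥ x = star x ⬝ᵥ (B *ᵥ x) := by
    rw [Matrix.star_mulVec, hB.1, ← Matrix.dotProduct_mulVec]
  have key : star (B *ᵥ x) ⬝ᵥ (A *ᵥ (B *ᵥ x)) = μ * (star x ⬝ᵥ (B *ᵥ x)) := by
    rw [hABx, dotProduct_smul, smul_eq_mul, hsy]
  rcases eq_or_ne (star x ⬝ᵥ (B *ᵥ x)) 0 with hr0 | hrne
  · have hBx : B *ᵥ x = 0 := (hB.dotProduct_mulVec_zero_iff x).mp hr0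
    have h0 : μ • x = 0 := by rw [hx, ← Matrix.mulVec_mulVec, hBx, Matrix.mulVec_zero]
    obtain ⟨i, hi⟩ := Function.ne_iff.mp hx0
    have hmul : μ * x i = 0 := congrFun h0 i
    rcases mul_eq_zero.mp hmul with h' | h'
    · simp [h']
    · exact absurd h' hi
  · have hcre := Complex.nonneg_iff.mp hc
    have hrre := Complex.nonneg_iff.mp hr
    have hrpos : 0 < (star x ⬝ᵥ (B *ᵥ x)).re := by
      rcases lt_or_eq_of_le hrre.1 with h' | h'
      · exact h'
      · exact absurd (Complex.ext h'.symm hrre.2.symm) hrne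
    have hc' : ((star (B *ᵥ x) ⬝ᵥ (A *ᵥ (B *ᵥ x))).re : ℂ) = star (B *ᵥ x) ⬝ᵥ (A *ᵥ (B *ᵥ x)) :=
      Complex.ext (by simp) (by simpa using hcre.2)
    have hr' : ((star x ⬝ᵥ (B *ᵥ x)).re : ℂ) = star x ⬝ᵥ (B *ᵥ x) :=
      Complex.ext (by simp) (by simpa using hrre.2)
    have hμ : μ = (((star (B *ᵥ x) ⬝ᵥ (A *ᵥ (B *ᵥ x))).re / (star x ⬝ᵥ (B *ᵥ x)).re : ℝ) : ℂ) := by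
      rw [Complex.ofReal_div, hc', hr', key]
      rw [mul_div_assoc, div_self hrne, mul_one]
    rw [hμ, Complex.ofReal_re]
    exact div_nonneg hcre.1 hrpos.le

lemma trace_map_complex (A : Matrix V V ℝ) :
    (A.map (algebraMap ℝ ℂ)).trace = ((A.trace : ℝ) : ℂ) := by
  simp [Matrix.trace, Matrix.map_apply, Matrix.diag]

/-! ### The tree potential function -/

open SimpleGraph

open scoped Classical in
/-- Indicator (as a real vector) of the set of vertices reachable from `a` after deleting the
edge `e`. -/
noncomputable def chiFun (T : SimpleGraph V) (a : V) (e : Sym2 V) : V → ℝ :=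
  fun x => if (T.deleteEdges {e}).Reachable a x then 1 else 0

lemma chi_mulVec {T : SimpleGraph V} [DecidableRel T.Adj] (hac : T.IsAcyclic)
    (w : Sym2 V → ℝ) {a b : V} (hab : T.Adj a b) :
    lapW T w *ᵥ chiFun T a s(a, b) = w s(a, b) • (Pi.single a 1 - Pi.single b 1) := by
  unfold lapW
  rw [_root_.sum_mulVec]
  rw [Finset.sum_eq_single s(a, b)]
  · rw [Matrix.smul_mulVec, edgeLap_mulVec]
    have h1 : chiFun T a s(a, b) a = 1 := by
      simp [chiFun, SimpleGraph.Reachable.refl]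
    have h0 : chiFun T a s(a, b) b = 0 := by
      have hbridge : T.IsBridge s(a, b) :=
        (SimpleGraph.isAcyclic_iff_forall_edge_isBridge.mp hac) (T.mem_edgeSet.mpr hab)
      have hnr : ¬(T.deleteEdges {s(a, b)}).Reachable a b :=
        (SimpleGraph.isBridge_iff.mp hbridge)
      simp [chiFun, hnr]
    rw [h1, h0]
    norm_num
  · intro f hf hne
    induction f using Sym2.ind with
    | _ c d =>
      have hcd : T.Adj c d := T.mem_edgeSet.mp (SimpleGraph.mem_edgeFinset.mp hf)
      have hadj : (T.deleteEdges {s(a, b)}).Adj c d :=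
        SimpleGraph.deleteEdges_adj.mpr ⟨hcd, by simpa using hne⟩
      have hiff : (T.deleteEdges {s(a, b)}).Reachable a c ↔
          (T.deleteEdges {s(a, b)}).Reachable a d :=
        ⟨fun h => h.trans hadj.reachable, fun h => h.trans hadj.symm.reachable⟩
      have hchi : chiFun T a s(a, b) c = chiFun T a s(a, b) d := by
        simp only [chiFun]
        by_cases h : (T.deleteEdges {s(a, b)}).Reachable a c
        · rw [if_pos h, if_pos (hiff.mp h)]
        · rw [if_neg h, if_neg (fun h' => h (hiff.mpr h'))]
      rw [Matrix.smul_mulVec, edgeLap_mulVec, hchi, sub_self, zero_smul, smul_zero]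
  · intro hmem
    exact absurd (SimpleGraph.mem_edgeFinset.mpr (T.mem_edgeSet.mpr hab)) hmem

/-- The potential function associated to a walk. -/
noncomputable def phiW {T : SimpleGraph V} (w : Sym2 V → ℝ) {u v : V} (p : T.Walk u v) :
    V → ℝ :=
  (p.darts.map fun d => (1 / w d.edge) • chiFun T d.fst d.edge).sum

lemma lap_phi {T : SimpleGraph V} [DecidableRel T.Adj] (hac : T.IsAcyclic)
    (w : Sym2 V → ℝ) (hw : ∀ e ∈ T.edgeSet, w e ≠ 0) {u v : V} (p : T.Walk u v) :
    lapW T w *ᵥ phiW w p = Pi.single u 1 - Pi.single v 1 := by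
  induction p with
  | nil =>
    simp only [phiW, SimpleGraph.Walk.darts_nil, List.map_nil, List.sum_nil,
      Matrix.mulVec_zero, sub_self]
  | @cons u x v h q ih =>
    have hphi : phiW w (SimpleGraph.Walk.cons h q)
        = (1 / w s(u, x)) • chiFun T u s(u, x) + phiW w q := by
      simp [phiW, SimpleGraph.Walk.darts_cons, SimpleGraph.Dart.edge]
    rw [hphi, Matrix.mulVec_add, Matrix.mulVec_smul, chi_mulVec hac w h, ih, smul_smul,
      one_div_mul_cancel (hw _ (T.mem_edgeSet.mpr h)), one_smul]
    abel

lemma dart_reach {T : SimpleGraph V} {u v : V} {p : T.Walk u v} (hp : p.IsTrail)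
    {d : T.Dart} (hd : d ∈ p.darts) :
    (T.deleteEdges {d.edge}).Reachable u d.fst ∧ (T.deleteEdges {d.edge}).Reachable d.snd v := by
  induction p with
  | nil => simp at hd
  | @cons u x v h q ih =>
    rw [SimpleGraph.Walk.darts_cons, List.mem_cons] at hd
    have hq : q.IsTrail := (SimpleGraph.Walk.isTrail_cons h q).mp hp |>.1
    have hnotmem : s(u, x) ∉ q.edges := ((SimpleGraph.Walk.isTrail_cons h q).mp hp).2
    rcases hd with rfl | hd
    · constructor
      · exact SimpleGraph.Reachable.refl _
      · have : ∀ e ∈ q.edges, e ∉ ({SimpleGraph.Dart.edge ⟨(u, x), h⟩} : Set (Sym2 V)) := by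
          intro e he
          simp only [Set.mem_singleton_iff]
          rintro rfl
          exact hnotmem he
        exact ⟨q.toDeleteEdges _ this⟩
    · obtain ⟨h1, h2⟩ := ih hq hd
      have hedge : d.edge ∈ q.edges := List.mem_map_of_mem (f := SimpleGraph.Dart.edge) hd
      have hne : s(u, x) ≠ d.edge := fun hcontra => hnotmem (hcontra ▸ hedge)
      have hadj : (T.deleteEdges {d.edge}).Adj u x :=
        SimpleGraph.deleteEdges_adj.mpr ⟨h, by simpa using hne⟩
      exact ⟨hadj.reachable.trans h1, h2⟩

lemma list_sum_apply (l : List (V → ℝ)) (x : V) :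
    l.sum x = (l.map fun g => g x).sum := by
  induction l with
  | nil => rfl
  | cons a l ih => simp [ih]

lemma phi_apply_sub {T : SimpleGraph V} (hac : T.IsAcyclic) (w : Sym2 V → ℝ) {u v : V}
    {p : T.Walk u v} (hp : p.IsPath) :
    phiW w p u - phiW w p v = (p.edges.map fun e => 1 / w e).sum := by
  have hchiu : ∀ d ∈ p.darts, chiFun T d.fst d.edge u = 1 := by
    intro d hd
    have := (dart_reach hp.isTrail hd).1
    simp [chiFun, this.symm]
  have hchiv : ∀ d ∈ p.darts, chiFun T d.fst d.edge v = 0 := by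
    intro d hd
    have h2 := (dart_reach hp.isTrail hd).2
    have hbridge : T.IsBridge d.edge :=
      (SimpleGraph.isAcyclic_iff_forall_edge_isBridge.mp hac) (d.edge_mem)
    have hnr : ¬(T.deleteEdges {d.edge}).Reachable d.fst d.snd := by
      have := SimpleGraph.isBridge_iff.mp (by rwa [SimpleGraph.Dart.edge] at hbridge)
      exact this
    have : ¬(T.deleteEdges {d.edge}).Reachable d.fst v := fun hcontra =>
      hnr (hcontra.trans h2.symm)
    simp [chiFun, this]
  unfold phiW
  rw [list_sum_apply, list_sum_apply, List.map_map, List.map_map]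
  have h1 : (p.darts.map ((fun g => g u) ∘ fun d => (1 / w d.edge) • chiFun T d.fst d.edge))
      = p.darts.map fun d => 1 / w d.edge := by
    apply List.map_congr_left
    intro d hd
    simp [hchiu d hd]
  have h2 : (p.darts.map ((fun g => g v) ∘ fun d => (1 / w d.edge) • chiFun T d.fst d.edge))
      = p.darts.map fun _ => (0 : ℝ) := by
    apply List.map_congr_left
    intro d hd
    simp [hchiv d hd]
  rw [h1, h2]
  have hedges : p.edges = p.darts.map SimpleGraph.Dart.edge := rfl
  rw [hedges, List.map_map]
  have h3 : (p.darts.map fun (_ : _) => (0:ℝ)).sum = 0 := by simp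
  rw [h3, sub_zero]
  exact congrArg List.sum (List.map_congr_left fun d _ => rfl)

lemma quad_eq_treePathWeight {T : SimpleGraph V} [DecidableRel T.Adj] (hT : T.IsTree)
    (w : Sym2 V → ℝ) (hw : ∀ e ∈ T.edgeSet, w e ≠ 0) (M : Matrix V V ℝ)
    (hM1 : lapW T w * M * lapW T w = lapW T w) (u v : V) :
    (Pi.single u 1 - Pi.single v 1) ⬝ᵥ (M *ᵥ (Pi.single u 1 - Pi.single v 1))
      = treePathWeight T hT w u v := by
  set p := (hT.existsUnique_path u v).choose with hp
  have hpath : p.IsPath := (hT.existsUnique_path u v).choose_spec.1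
  set φ := phiW w p with hφ
  set L := lapW T w with hL
  have hLφ : L *ᵥ φ = Pi.single u 1 - Pi.single v 1 := lap_phi hT.2 w hw p
  rw [← hLφ]
  have step : (L *ᵥ φ) ⬝ᵥ (M *ᵥ (L *ᵥ φ)) = φ ⬝ᵥ (L *ᵥ φ) := by
    calc (L *ᵥ φ) ⬝ᵥ (M *ᵥ (L *ᵥ φ))
        = (L *ᵥ φ) ⬝ᵥ ((M * L) *ᵥ φ) := by rw [Matrix.mulVec_mulVec]
      _ = (φ ᵥ* L) ⬝ᵥ ((M * L) *ᵥ φ) := by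
          rw [← Matrix.mulVec_transpose, hL, lapW_transpose]
      _ = φ ⬝ᵥ (L *ᵥ ((M * L) *ᵥ φ)) := (Matrix.dotProduct_mulVec φ L _).symm
      _ = φ ⬝ᵥ ((L * (M * L)) *ᵥ φ) := by rw [Matrix.mulVec_mulVec]
      _ = φ ⬝ᵥ (L *ᵥ φ) := by rw [← Matrix.mul_assoc, hM1]
  rw [step, hLφ, dotProduct_edge, phi_apply_sub hT.2 w hpath]
  rfl

lemma trace_edge_mul (u v : V) (M : Matrix V V ℝ) :
    (edgeLap s(u, v) * M).trace
      = (Pi.single u 1 - Pi.single v 1) ⬝ᵥ (M *ᵥ (Pi.single u 1 - Pi.single v 1)) := by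
  rw [edgeLap_mk]
  simp only [Matrix.trace, Matrix.diag, Matrix.mul_apply, Matrix.vecMulVec_apply,
    dotProduct, Matrix.mulVec]
  rw [Finset.sum_comm]
  refine Finset.sum_congr rfl fun j _ => ?_
  rw [Finset.mul_sum]
  refine Finset.sum_congr rfl fun i _ => ?_
  ring

lemma trace_eq_stretch (G : SimpleGraph V) [DecidableRel G.Adj]
    {T : SimpleGraph V} [DecidableRel T.Adj] (hT : T.IsTree) (hTG : T ≤ G)
    (w : Sym2 V → ℝ) (hw : ∀ e ∈ G.edgeSet, 0 < w e) (M : Matrix V V ℝ)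
    (hM1 : lapW T w * M * lapW T w = lapW T w) :
    (lapW G w * M).trace = stretch G T hT w := by
  have hwT : ∀ e ∈ T.edgeSet, w e ≠ 0 := fun e he =>
    (hw e (SimpleGraph.edgeSet_mono hTG he)).ne'
  unfold lapW stretch
  rw [Finset.sum_mul, Matrix.trace_sum]
  refine Finset.sum_congr rfl fun e he => ?_
  induction e using Sym2.ind with
  | _ u v =>
    rw [Matrix.smul_mul, Matrix.trace_smul, trace_edge_mul,
      quad_eq_treePathWeight hT w hwT M hM1 u v, stretchEdge, Sym2.lift_mk]
    simp [smul_eq_mul]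

end Aux

open scoped ComplexOrder in
open Polynomial in
/-- If `G` is a connected weighted graph with positive edge weights, `T` a spanning tree of
`G`, and `M` the Moore–Penrose pseudoinverse of `L_T`, then for every `t > 0` the number of
eigenvalues of `L_G · M` (roots of its characteristic polynomial over `ℂ`, with
multiplicity) whose real part exceeds `t` is at most `st_T(G) / t`. -/
theorem count_eigenvalues_gt_le_stretch_div {V : Type*} [Fintype V] [DecidableEq V]
    (G T : SimpleGraph V) [DecidableRel G.Adj] [DecidableRel T.Adj]
    (hG : G.Connected) (hT : T.IsTree) (hTG : T ≤ G)
    (w : Sym2 V → ℝ) (hw : ∀ e ∈ G.edgeSet, 0 < w e)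
    (M : Matrix V V ℝ)
    (hM1 : lapW T w * M * lapW T w = lapW T w)
    (hM2 : M * lapW T w * M = M)
    (hM3 : (lapW T w * M)ᵀ = lapW T w * M)
    (hM4 : (M * lapW T w)ᵀ = M * lapW T w)
    (t : ℝ) (ht : 0 < t) :
    ((((lapW G w * M).charpoly.map (algebraMap ℝ ℂ)).roots.filter
        fun μ => t < μ.re).card : ℝ) ≤ stretch G T hT w / t := by
  classical
  set L := lapW T w with hLdef
  -- positivity facts
  have hwT : ∀ e ∈ T.edgeSet, 0 ≤ w e := fun e he =>
    (hw e (SimpleGraph.edgeSet_mono hTG he)).le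
  have hLpsd : L.PosSemidef := lapW_posSemidef T w hwT
  have hGpsd : (lapW G w).PosSemidef := lapW_posSemidef G w (fun e he => (hw e he).le)
  have hMsym : Mᵀ = M := by
    have hAsym : Lᵀ = L := lapW_transpose T w
    exact pinv_symm hAsym hM1 hM2 hM3 hM4
  have hMpsd : M.PosSemidef := by
    have : (M * L * Mᴴ).PosSemidef := hLpsd.mul_mul_conjTranspose_same M
    rwa [conjTranspose_real, hMsym, hM2] at this
  -- complex matrices
  set A := (lapW G w).map (algebraMap ℝ ℂ) with hAdef
  set B := M.map (algebraMap ℝ ℂ) with hBdef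
  have hApsd : A.PosSemidef := posSemidef_map hGpsd
  have hBpsd : B.PosSemidef := posSemidef_map hMpsd
  have hcp : (lapW G w * M).charpoly.map (algebraMap ℝ ℂ) = (A * B).charpoly := by
    rw [hAdef, hBdef, ← Matrix.map_mul, Matrix.charpoly_map]
  set R := ((lapW G w * M).charpoly.map (algebraMap ℝ ℂ)).roots with hRdef
  have hRroots : R = (A * B).charpoly.roots := by rw [hRdef, hcp]
  -- sum of roots equals trace equals stretch
  have hsum : R.sum = ((stretch G T hT w : ℝ) : ℂ) := by
    rw [hRroots, ← Matrix.trace_eq_sum_roots_charpoly, hAdef, hBdef, ← Matrix.map_mul,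
      trace_map_complex, trace_eq_stretch G hT hTG w hw M hM1]
  -- all roots have nonnegative real part
  have hrenn : ∀ μ ∈ R, 0 ≤ μ.re := by
    intro μ hμ
    rw [hRroots] at hμ
    have hne : (A * B).charpoly ≠ 0 := (Matrix.charpoly_monic _).ne_zero
    exact root_re_nonneg hApsd hBpsd ((Polynomial.mem_roots hne).mp hμ)
  -- Markov bound
  set S := R.filter (fun μ => t < μ.re) with hSdef
  have hcard : (Multiset.card S : ℝ) * t ≤ ((S.map Complex.re).sum) := by
    have h1 : ∀ x ∈ S.map Complex.re, t ≤ x := by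
      intro x hx
      obtain ⟨μ, hμ, rfl⟩ := Multiset.mem_map.mp hx
      exact (Multiset.mem_filter.mp hμ).2.le
    have := Multiset.card_nsmul_le_sum h1
    rwa [Multiset.card_map, nsmul_eq_mul] at this
  have hle : ((S.map Complex.re).sum) ≤ ((R.map Complex.re).sum) := by
    have hsplit : S + R.filter (fun μ => ¬ t < μ.re) = R :=
      Multiset.filter_add_not _ R
    calc (S.map Complex.re).sum
        ≤ (S.map Complex.re).sum + ((R.filter (fun μ => ¬ t < μ.re)).map Complex.re).sum := by
          have : 0 ≤ ((R.filter (fun μ => ¬ t < μ.re)).map Complex.re).sum := by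
            refine Multiset.sum_nonneg ?_
            intro x hx
            obtain ⟨μ, hμ, rfl⟩ := Multiset.mem_map.mp hx
            exact hrenn μ (Multiset.mem_of_mem_filter hμ)
          linarith
      _ = ((S + R.filter (fun μ => ¬ t < μ.re)).map Complex.re).sum := by
          rw [Multiset.map_add, Multiset.sum_add]
      _ = (R.map Complex.re).sum := by rw [hsplit]
  have hretr : (R.map Complex.re).sum = stretch G T hT w := by
    have := congrArg Complex.re hsum
    rw [Complex.ofReal_re] at this
    rw [← this]
    exact (map_multiset_sum Complex.reAddGroupHom R).symm ▸ rfl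
  have hfinal : (Multiset.card S : ℝ) * t ≤ stretch G T hT w := by
    rw [← hretr]; exact le_trans hcard hle
  rw [le_div_iff₀ ht]
  exact hfinal
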